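/- Let P₁, P₂, P₃ be elements of a complex Banach algebra, set 𝓛 = P₁ + P₂ + P₃, S(t) = exp(tP₁)·exp(tP₂)·exp(tP₃) and E(t) = S(t) − exp(t𝓛). Then for every real t ≥ 0, E(t) = ∫₀ᵗ exp((t−τ)𝓛)·[exp(τP₁), P₂]·exp(τP₂)·exp(τP₃) dτ + ∫₀ᵗ exp((t−τ)𝓛)·[exp(τP₁)·exp(τP₂), P₃]·exp(τP₃) dτ. -/

import Mathlib

open NormedSpace

section aux

variable {𝒜 : Type*} [NormedRing 𝒜] [NormedAlgebra ℂ 𝒜] [CompleteSpace 𝒜]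

private lemma contE (P : 𝒜) : Continuous fun τ : ℝ => exp (τ • P) :=
  continuous_iff_continuousAt.2 fun τ => (hasDerivAt_exp_smul_const' (𝕂 := ℝ) P τ).continuousAt

private lemma contE' (t : ℝ) (P : 𝒜) : Continuous fun τ : ℝ => exp ((t - τ) • P) :=
  (contE P).comp (continuous_const.sub continuous_id)

private lemma derivE (P : 𝒜) (τ : ℝ) :
    HasDerivAt (fun u : ℝ => exp (u • P)) (P * exp (τ • P)) τ :=
  hasDerivAt_exp_smul_const' P τ

private lemma derivE' (t : ℝ) (P : 𝒜) (τ : ℝ) :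
    HasDerivAt (fun u : ℝ => exp ((t - u) • P)) (-(P * exp ((t - τ) • P))) τ := by
  have h1 : HasDerivAt (fun u : ℝ => t - u) (-1 : ℝ) τ := by
    simpa using (hasDerivAt_id' τ).const_sub t
  have := (derivE P (t - τ)).scomp τ h1
  simpa [Function.comp_def] using this

end aux

/-- For `P₁, P₂, P₃` in a complex Banach algebra, `𝓛 = P₁ + P₂ + P₃`,
`S(t) = exp(tP₁)exp(tP₂)exp(tP₃)` and `E(t) = S(t) − exp(t𝓛)`, for all `t ≥ 0`:
`E(t) = ∫₀ᵗ exp((t−τ)𝓛)[exp(τP₁),P₂]exp(τP₂)exp(τP₃) dτ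
      + ∫₀ᵗ exp((t−τ)𝓛)[exp(τP₁)exp(τP₂),P₃]exp(τP₃) dτ`. -/
theorem E_duhamel {𝒜 : Type*} [NormedRing 𝒜] [NormedAlgebra ℂ 𝒜] [CompleteSpace 𝒜]
    (P₁ P₂ P₃ : 𝒜) (𝓛 : 𝒜) (h𝓛 : 𝓛 = P₁ + P₂ + P₃) :
    ∀ t : ℝ, 0 ≤ t →
      exp ((t : ℂ) • P₁) * exp ((t : ℂ) • P₂) * exp ((t : ℂ) • P₃) - exp ((t : ℂ) • 𝓛)
        = (∫ τ in (0 : ℝ)..t, exp (((t - τ : ℝ) : ℂ) • 𝓛)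
              * (exp ((τ : ℂ) • P₁) * P₂ - P₂ * exp ((τ : ℂ) • P₁))
              * exp ((τ : ℂ) • P₂) * exp ((τ : ℂ) • P₃))
          + ∫ τ in (0 : ℝ)..t, exp (((t - τ : ℝ) : ℂ) • 𝓛)
              * (exp ((τ : ℂ) • P₁) * exp ((τ : ℂ) • P₂) * P₃
                  - P₃ * (exp ((τ : ℂ) • P₁) * exp ((τ : ℂ) • P₂)))
              * exp ((τ : ℂ) • P₃) := by
  intro t _
  have hee : (exp : 𝒜 → 𝒜) = exp := rfl
  simp only [Complex.coe_smul]
  -- abbreviations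
  set f₁ : ℝ → 𝒜 := fun τ => exp ((t - τ) • 𝓛)
      * (exp (τ • P₁) * P₂ - P₂ * exp (τ • P₁)) * exp (τ • P₂) * exp (τ • P₃) with hf₁
  set f₂ : ℝ → 𝒜 := fun τ => exp ((t - τ) • 𝓛)
      * (exp (τ • P₁) * exp (τ • P₂) * P₃ - P₃ * (exp (τ • P₁) * exp (τ • P₂)))
      * exp (τ • P₃) with hf₂
  set g : ℝ → 𝒜 := fun τ =>
    exp ((t - τ) • 𝓛) * (exp (τ • P₁) * exp (τ • P₂)) * exp (τ • P₃) with hg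
  have hc₁ : Continuous f₁ := by
    apply Continuous.mul; apply Continuous.mul; apply Continuous.mul
    · exact contE' t 𝓛
    · exact ((contE P₁).mul continuous_const).sub (continuous_const.mul (contE P₁))
    · exact contE P₂
    · exact contE P₃
  have hc₂ : Continuous f₂ := by
    apply Continuous.mul; apply Continuous.mul
    · exact contE' t 𝓛
    · exact (((contE P₁).mul (contE P₂)).mul continuous_const).sub
        (continuous_const.mul ((contE P₁).mul (contE P₂)))
    · exact contE P₃
  have hderiv : ∀ τ : ℝ, HasDerivAt g (f₁ τ + f₂ τ) τ := by
    intro τ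
    have h := ((derivE' t 𝓛 τ).mul ((derivE P₁ τ).mul (derivE P₂ τ))).mul (derivE P₃ τ)
    have hcomm : 𝓛 * exp ((t - τ) • 𝓛) = exp ((t - τ) • 𝓛) * 𝓛 :=
      (((Commute.refl 𝓛).smul_right ((t : ℝ) - τ)).exp_right).eq
    have heq : (-(𝓛 * exp ((t - τ) • 𝓛)) * (exp (τ • P₁) * exp (τ • P₂)) +
          exp ((t - τ) • 𝓛) * (P₁ * exp (τ • P₁) * exp (τ • P₂) +
            exp (τ • P₁) * (P₂ * exp (τ • P₂)))) * exp (τ • P₃) +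
          exp ((t - τ) • 𝓛) * (exp (τ • P₁) * exp (τ • P₂)) * (P₃ * exp (τ • P₃)) =
          f₁ τ + f₂ τ := by
      rw [hf₁, hf₂, hcomm, h𝓛]
      noncomm_ring
    exact heq ▸ h
  have hint : IntervalIntegrable (fun τ => f₁ τ + f₂ τ) MeasureTheory.volume 0 t :=
    (hc₁.add hc₂).intervalIntegrable 0 t
  have hFTC : (∫ τ in (0:ℝ)..t, (f₁ τ + f₂ τ)) = g t - g 0 :=
    intervalIntegral.integral_eq_sub_of_hasDerivAt (fun τ _ => hderiv τ) hint
  have hsplit : (∫ τ in (0:ℝ)..t, (f₁ τ + f₂ τ)) =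
      (∫ τ in (0:ℝ)..t, f₁ τ) + ∫ τ in (0:ℝ)..t, f₂ τ :=
    intervalIntegral.integral_add (hc₁.intervalIntegrable 0 t) (hc₂.intervalIntegrable 0 t)
  have hg0 : g 0 = exp (t • 𝓛) := by simp [hg, exp_zero]
  have hgt : g t = exp (t • P₁) * exp (t • P₂) * exp (t • P₃) := by
    simp [hg, exp_zero]
  rw [← hsplit, hFTC, hg0, hgt]
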